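/- In the group of bijections of 2^ℕ (indeed inside yGy) the identity y₁^{-1} y₀ x_∅ y₀^{-1} y₁ = x_∅² holds. Equivalently, setting √x_∅ := y₁ y₀^{-1} x_∅ y₀ y₁^{-1}, one has (√x_∅)² = x_∅. -/
import Mathlib


namespace LodhaMoore

/-- Infinite binary sequences `2^ℕ`. -/
abbrev Seq : Type := ℕ → Bool

/-- The underlying function of the basic bijection `x`:
`00η ↦ 0η`, `01η ↦ 10η`, `1η ↦ 11η` (reading `false` as `0` and `true` as `1`). -/
def xFun (ξ : Seq) : Seq := fun n =>
  if ξ 0 then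
    match n with
    | 0 => true
    | 1 => true
    | n+2 => ξ (n+1)
  else if ξ 1 then
    match n with
    | 0 => true
    | 1 => false
    | n+2 => ξ (n+2)
  else
    match n with
    | 0 => false
    | n+1 => ξ (n+2)

/-- The inverse of `xFun`: `0η ↦ 00η`, `10η ↦ 01η`, `11η ↦ 1η`. -/
def xInv (ξ : Seq) : Seq := fun n =>
  if ξ 0 then
    if ξ 1 then
      match n with
      | 0 => true
      | n+1 => ξ (n+2)
    else
      match n with
      | 0 => false
      | 1 => true
      | n+2 => ξ (n+2)
  else
    match n with
    | 0 => false
    | 1 => false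
    | n+2 => ξ (n+1)

/-- `yAux true n ξ` is the `n`-th bit of `ξ.y`, and `yAux false n ξ` is the `n`-th bit of
`ξ.y⁻¹`, where `y` is defined by `00η ↦ 0(η.y)`, `01η ↦ 10(η.y⁻¹)`, `1η ↦ 11(η.y)`,
so `y⁻¹` is given by `0η ↦ 00(η.y⁻¹)`, `10η ↦ 01(η.y)`, `11η ↦ 1(η.y⁻¹)`. -/
def yAux : Bool → ℕ → Seq → Bool
  | true, 0, ξ => if ξ 0 then true else if ξ 1 then true else false
  | true, 1, ξ => if ξ 0 then true else if ξ 1 then false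
      else yAux true 0 (fun k => ξ (k+2))
  | true, n+2, ξ =>
      if ξ 0 then yAux true n (fun k => ξ (k+1))
      else if ξ 1 then yAux false n (fun k => ξ (k+2))
      else yAux true (n+1) (fun k => ξ (k+2))
  | false, 0, ξ => if ξ 0 then (if ξ 1 then true else false) else false
  | false, 1, ξ => if ξ 0 then (if ξ 1 then yAux false 0 (fun k => ξ (k+2)) else true)
      else false
  | false, n+2, ξ =>
      if ξ 0 then
        (if ξ 1 then yAux false (n+1) (fun k => ξ (k+2))
         else yAux true n (fun k => ξ (k+2)))
      else yAux false n (fun k => ξ (k+1))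

lemma yAux_inv (n : ℕ) :
    ∀ ξ : Seq, (yAux false n (fun k => yAux true k ξ) = ξ n) ∧
      (yAux true n (fun k => yAux false k ξ) = ξ n) := by
  induction n using Nat.strong_induction_on with
  | _ n IH =>
    intro ξ
    constructor
    · cases h0 : ξ 0 <;> cases h1 : ξ 1 <;> rcases n with _ | _ | n <;>
        simp [yAux, h0, h1]
      · have e : (fun k => yAux true (k+1) ξ) = fun k => yAux true k (fun j => ξ (j+2)) :=
          funext fun k => by cases k <;> simp [yAux, h0, h1]
        rw [e]; exact (IH n (by omega) _).1
      · exact (IH n (by omega) _).2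
      · intro h2 h3; simp_all
      · exact (IH (n+1) (by omega) _).1
      · exact (IH (n+1) (by omega) _).1
    · cases h0 : ξ 0 <;> cases h1 : ξ 1 <;> rcases n with _ | _ | n <;>
        simp [yAux, h0, h1]
      · exact (IH (n+1) (by omega) _).2
      · cases h2 : ξ 2 <;> simp [h2]
      · exact (IH (n+1) (by omega) _).2
      · exact (IH n (by omega) _).1
      · have e : (fun k => yAux false (k+1) ξ) = fun k => yAux false k (fun j => ξ (j+2)) :=
          funext fun k => by cases k <;> simp [yAux, h0, h1]
        rw [e]; exact (IH n (by omega) _).2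

/-- The basic bijection `x` of `2^ℕ`. -/
def xPerm : Equiv.Perm Seq where
  toFun := xFun
  invFun := xInv
  left_inv := by
    intro ξ
    funext n
    cases h0 : ξ 0 <;> cases h1 : ξ 1 <;>
      rcases n with _ | _ | n <;>
      simp [xFun, xInv, h0, h1]
  right_inv := by
    intro ξ
    funext n
    cases h0 : ξ 0 <;> cases h1 : ξ 1 <;>
      rcases n with _ | _ | n <;>
      simp [xFun, xInv, h0, h1]

/-- The basic bijection `y` of `2^ℕ`. -/
def yPerm : Equiv.Perm Seq where
  toFun ξ := fun n => yAux true n ξ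
  invFun ξ := fun n => yAux false n ξ
  left_inv ξ := funext fun n => (yAux_inv n ξ).1
  right_inv ξ := funext fun n => (yAux_inv n ξ).2

/-- Prepend a finite word to an infinite sequence. -/
def append (s : List Bool) (ξ : Seq) : Seq := fun n =>
  if h : n < s.length then s.get ⟨n, h⟩ else ξ (n - s.length)

/-- Drop the first `k` letters of an infinite sequence. -/
def dropN (k : ℕ) (ξ : Seq) : Seq := fun n => ξ (n + k)

/-- `hasPrefix s ξ` iff the finite word `s` is a prefix of `ξ`. -/
def hasPrefix (s : List Bool) (ξ : Seq) : Prop := ∀ i : Fin s.length, ξ i = s.get i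

instance (s : List Bool) (ξ : Seq) : Decidable (hasPrefix s ξ) := by
  unfold hasPrefix; infer_instance

lemma hasPrefix_append (s : List Bool) (ξ : Seq) : hasPrefix s (append s ξ) := by
  intro i
  simp [append, i.isLt]

lemma dropN_append (s : List Bool) (ξ : Seq) : dropN s.length (append s ξ) = ξ := by
  funext n
  simp [dropN, append, Nat.not_lt.2 (Nat.le_add_left _ _)]

lemma append_dropN {s : List Bool} {ξ : Seq} (h : hasPrefix s ξ) :
    append s (dropN s.length ξ) = ξ := by
  funext n
  by_cases h' : n < s.length
  · simpa [append, h'] using (h ⟨n, h'⟩).symm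
  · simp [append, h', dropN, Nat.sub_add_cancel (Nat.le_of_not_lt h')]

/-- The bijection of `2^ℕ` acting as the bijection `f` "at the address `s`":
`sη ↦ s(η.f)`, and `ξ ↦ ξ` if `s` is not a prefix of `ξ`. -/
def localize (s : List Bool) (f : Equiv.Perm Seq) : Equiv.Perm Seq where
  toFun ξ := if hasPrefix s ξ then append s (f (dropN s.length ξ)) else ξ
  invFun ξ := if hasPrefix s ξ then append s (f.symm (dropN s.length ξ)) else ξ
  left_inv := by
    intro ξ
    by_cases h : hasPrefix s ξ
    · simp [h, hasPrefix_append, dropN_append, append_dropN h]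
    · simp [h]
  right_inv := by
    intro ξ
    by_cases h : hasPrefix s ξ
    · simp [h, hasPrefix_append, dropN_append, append_dropN h]
    · simp [h]

/-- The group of bijections of `2^ℕ`.  Composition is written so that in a product `g * h`
the factor `g` acts first: bijections act on the right, as in Lodha--Moore's paper. -/
abbrev M : Type := (Equiv.Perm Seq)ᵐᵒᵖ

/-- The generator `x_s`, `s ∈ 2^{<ℕ}` (a finite binary sequence, i.e. a `List Bool`). -/
def px (s : List Bool) : M := MulOpposite.op (localize s xPerm)

/-- The generator `y_s`, `s ∈ 2^{<ℕ}`. -/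
def py (s : List Bool) : M := MulOpposite.op (localize s yPerm)

/-- `t` is a word of the form `0^n`, `n ≥ 0`. -/
def allFalse (t : List Bool) : Prop := ∀ b ∈ t, b = false

/-- `t` is a word of the form `1^n`, `n ≥ 0`. -/
def allTrue (t : List Bool) : Prop := ∀ b ∈ t, b = true

instance (t : List Bool) : Decidable (allFalse t) := by unfold allFalse; infer_instance
instance (t : List Bool) : Decidable (allTrue t) := by unfold allTrue; infer_instance

/-- Addresses allowed for the `y`-generators of the Lodha–Moore group `G`. -/
def gSet : Set (List Bool) := {t | ¬ allFalse t ∧ ¬ allTrue t}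
/-- Addresses allowed for the `y`-generators of the Lodha–Moore group `G_y`. -/
def gySet : Set (List Bool) := {t | ¬ allFalse t}
/-- Addresses allowed for the `y`-generators of the Lodha–Moore group `yG`. -/
def ygSet : Set (List Bool) := {t | ¬ allTrue t}
/-- Addresses allowed for the `y`-generators of the Lodha–Moore group `yGy`. -/
def ygySet : Set (List Bool) := Set.univ

/-- The Lodha–Moore style group with `y`-generators allowed at the addresses in `A`. -/
def LM (A : Set (List Bool)) : Subgroup M :=
  Subgroup.closure (Set.range px ∪ py '' A)

/-- The Lodha–Moore group `G`. -/
def G : Subgroup M := LM gSet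
/-- The Lodha–Moore group `G_y`. -/
def Gy : Subgroup M := LM gySet
/-- The Lodha–Moore group `yG`. -/
def yG : Subgroup M := LM ygSet
/-- The Lodha–Moore group `yGy`. -/
def yGy : Subgroup M := LM ygySet

/-- The semi-deferred subgroup `H(s)` of the Lodha–Moore group `H = LM A`: the subgroup
generated by those generators of `H` whose address has `s` as a prefix. -/
def LMdef (A : Set (List Bool)) (s : List Bool) : Subgroup M :=
  Subgroup.closure ((px '' {t | s <+: t}) ∪ (py '' {t | t ∈ A ∧ s <+: t}))

lemma px_mem (A : Set (List Bool)) (s : List Bool) : px s ∈ LM A :=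
  Subgroup.subset_closure (Or.inl ⟨s, rfl⟩)

lemma py_mem {A : Set (List Bool)} {s : List Bool} (h : s ∈ A) : py s ∈ LM A :=
  Subgroup.subset_closure (Or.inr ⟨s, h, rfl⟩)

lemma px_mem_def (A : Set (List Bool)) {s t : List Bool} (h : s <+: t) :
    px t ∈ LMdef A s :=
  Subgroup.subset_closure (Or.inl ⟨t, h, rfl⟩)

lemma py_mem_def {A : Set (List Bool)} {s t : List Bool} (h1 : t ∈ A) (h2 : s <+: t) :
    py t ∈ LMdef A s :=
  Subgroup.subset_closure (Or.inr ⟨t, ⟨h1, h2⟩, rfl⟩)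

/-- The conjugate subgroup `z B z⁻¹`. -/
def conjSubgroup {H : Type*} [Group H] (z : H) (B : Subgroup H) : Subgroup H :=
  B.map (MulAut.conj z).toMonoidHom

/-- The `MulEquiv` `φ.range ≃* ⊤` used to define an ascending HNN extension. -/
noncomputable def ascEquiv {B : Type*} [Group B] (φ : B →* B) (hφ : Function.Injective φ) :
    (φ.range : Subgroup B) ≃* (⊤ : Subgroup B) :=
  (MonoidHom.ofInjective hφ).symm.trans Subgroup.topEquiv.symm

/-- The ascending HNN extension `B*_{φ,t} = ⟨B, t ∣ t⁻¹ b t = φ(b) for all b ∈ B⟩` of the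
group `B` along the injective endomorphism `φ`.  (In `HNNExtension B φ.range ⊤ (ascEquiv φ hφ)`
the defining relation is exactly `t⁻¹ * of b * t = of (φ b)` for all `b : B`.) -/
noncomputable abbrev AscHNN {B : Type*} [Group B] (φ : B →* B)
    (hφ : Function.Injective φ) : Type _ :=
  HNNExtension B φ.range ⊤ (ascEquiv φ hφ)

/-! ### Auxiliary lemmas for `sqrt_x_identity` -/

lemma hasPrefix_singleton {b : Bool} {ξ : Seq} : hasPrefix [b] ξ ↔ ξ 0 = b := by
  constructor
  · intro h; simpa using h ⟨0, by simp⟩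
  · intro h i; fin_cases i <;> simpa using h

lemma localize_apply_pos {b : Bool} (f : Equiv.Perm Seq) {ξ : Seq} (h : ξ 0 = b) :
    localize [b] f ξ = append [b] (f (dropN 1 ξ)) := by
  simp [localize, hasPrefix_singleton.2 h]

lemma localize_apply_neg {b : Bool} (f : Equiv.Perm Seq) {ξ : Seq} (h : ¬ ξ 0 = b) :
    localize [b] f ξ = ξ := by
  show (if hasPrefix [b] ξ then _ else ξ) = ξ
  rw [if_neg (fun hp => h (hasPrefix_singleton.1 hp))]

lemma localize_symm_apply_pos {b : Bool} (f : Equiv.Perm Seq) {ξ : Seq} (h : ξ 0 = b) :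
    (localize [b] f).symm ξ = append [b] (f.symm (dropN 1 ξ)) := by
  simp [localize, hasPrefix_singleton.2 h]

lemma localize_symm_apply_neg {b : Bool} (f : Equiv.Perm Seq) {ξ : Seq} (h : ¬ ξ 0 = b) :
    (localize [b] f).symm ξ = ξ := by
  show (if hasPrefix [b] ξ then _ else ξ) = ξ
  rw [if_neg (fun hp => h (hasPrefix_singleton.1 hp))]

lemma localize_nil_apply (f : Equiv.Perm Seq) (ξ : Seq) : localize [] f ξ = f ξ := by
  have h : hasPrefix [] ξ := fun i => i.elim0
  have h2 : dropN 0 ξ = ξ := funext fun n => rfl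
  simp [localize, h, List.length, h2]
  funext n
  simp [append]

lemma append_single_zero (b : Bool) (ζ : Seq) : append [b] ζ 0 = b := by simp [append]

lemma append_single_succ (b : Bool) (ζ : Seq) (n : ℕ) : append [b] ζ (n+1) = ζ n := by
  simp [append]

lemma yPerm_apply (ξ : Seq) (n : ℕ) : yPerm ξ n = yAux true n ξ := rfl

lemma yPerm_symm_apply (ξ : Seq) (n : ℕ) : yPerm.symm ξ n = yAux false n ξ := rfl

lemma cancel_ff {η : Seq} (h0 : η 0 = false) (h1 : η 1 = false) (n : ℕ) :
    yAux false n (fun k => yAux true (k+1) η) = η (n+2) := by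
  have e : (fun k => yAux true (k+1) η) = fun k => yAux true k (fun j => η (j+2)) :=
    funext fun k => by cases k <;> simp [yAux, h0, h1]
  rw [e]; exact (yAux_inv n _).1

lemma xPerm_append_false_f {η : Seq} (hf : yAux true 0 η = false) :
    xPerm (append [false] (yPerm η)) = append [false] (fun n => yAux true (n+1) η) := by
  funext n
  rcases n with _ | n <;>
    simp [xPerm, xFun, append_single_zero, append_single_succ, yPerm_apply, hf]

lemma xPerm_append_false_t {η : Seq} (ht : yAux true 0 η = true) :
    xPerm (append [false] (yPerm η)) =
      append [true] (append [false] (fun n => yAux true (n+1) η)) := by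
  funext n
  rcases n with _ | _ | n <;>
    simp [xPerm, xFun, append_single_zero, append_single_succ, yPerm_apply, ht]

lemma xPerm_append_true (ρ : Seq) :
    xPerm (append [true] ρ) = append [true] (append [true] ρ) := by
  funext n
  rcases n with _ | _ | n <;>
    simp [xPerm, xFun, append_single_zero, append_single_succ]

lemma cancelA {η : Seq} (h0 : η 0 = false) (h1 : η 1 = false) :
    (fun k => yAux true (k+1) η) = yPerm (fun n => η (n+2)) :=
  funext fun k => by cases k <;> simp [yPerm_apply, yAux, h0, h1]

lemma cancelB {η : Seq} (h0 : η 0 = false) (h1 : η 1 = true) :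
    append [false] (fun k => yAux true (k+1) η) =
      yPerm.symm (append [false] (fun n => η (n+2))) := by
  funext n
  rcases n with _ | _ | n <;>
    simp [yPerm_symm_apply, yAux, append_single_zero, append_single_succ, h0, h1]

lemma cancelC {η : Seq} (h0 : η 0 = true) :
    append [false] (fun k => yAux true (k+1) η) =
      yPerm.symm (append [true] (append [false] (fun n => η (n+1)))) := by
  funext n
  rcases n with _ | _ | n <;>
    simp [yPerm_symm_apply, yAux, append_single_zero, append_single_succ, h0]

lemma cancelD (η : Seq) :
    append [true] (yPerm.symm η) =
      yPerm.symm (append [true] (append [true] η)) := by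
  funext n
  rcases n with _ | _ | n <;>
    simp [yPerm_symm_apply, yAux, append_single_zero, append_single_succ]

lemma key_fun (ξ : Seq) :
    localize [true] yPerm ((localize [false] yPerm).symm (xPerm (localize [false] yPerm
      ((localize [true] yPerm).symm ξ)))) = xPerm (xPerm ξ) := by
  cases h0 : ξ 0
  · rw [localize_symm_apply_neg (b := true) yPerm (by simp [h0]),
        localize_apply_pos (b := false) yPerm h0]
    cases h1 : ξ 1
    · have e0 : dropN 1 ξ 0 = false := h1
      cases h2 : ξ 2
      · -- case A : ξ = 000...
        have e1 : dropN 1 ξ 1 = false := h2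
        have hf : yAux true 0 (dropN 1 ξ) = false := by simp [yAux, e0, e1]
        rw [xPerm_append_false_f hf,
            localize_symm_apply_pos (b := false) yPerm (append_single_zero _ _),
            show dropN 1 (append [false] (fun n => yAux true (n+1) (dropN 1 ξ))) = _ from
              dropN_append [false] _,
            cancelA e0 e1, Equiv.symm_apply_apply,
            localize_apply_neg (b := true) yPerm (by simp [append_single_zero])]
        funext n
        rcases n with _ | n <;>
          simp [xPerm, xFun, append_single_zero, append_single_succ, dropN, h0, h1, h2]
      · -- case B : ξ = 001...
        have e1 : dropN 1 ξ 1 = true := h2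
        have ht : yAux true 0 (dropN 1 ξ) = true := by simp [yAux, e0, e1]
        rw [xPerm_append_false_t ht,
            localize_symm_apply_neg (b := false) yPerm (by simp [append_single_zero]),
            localize_apply_pos (b := true) yPerm (append_single_zero _ _),
            show dropN 1 (append [true] (append [false]
                (fun n => yAux true (n+1) (dropN 1 ξ)))) = _ from dropN_append [true] _,
            cancelB e0 e1, Equiv.apply_symm_apply]
        funext n
        rcases n with _ | _ | n <;>
          simp [xPerm, xFun, append_single_zero, append_single_succ, dropN, h0, h1, h2]
    · -- case C : ξ = 01...
      have e0 : dropN 1 ξ 0 = true := h1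
      have ht : yAux true 0 (dropN 1 ξ) = true := by simp [yAux, e0]
      rw [xPerm_append_false_t ht,
          localize_symm_apply_neg (b := false) yPerm (by simp [append_single_zero]),
          localize_apply_pos (b := true) yPerm (append_single_zero _ _),
          show dropN 1 (append [true] (append [false]
              (fun n => yAux true (n+1) (dropN 1 ξ)))) = _ from dropN_append [true] _,
          cancelC e0, Equiv.apply_symm_apply]
      funext n
      rcases n with _ | _ | _ | n <;>
        simp [xPerm, xFun, append_single_zero, append_single_succ, dropN, h0, h1]
  · -- case D : ξ = 1...
    rw [localize_symm_apply_pos (b := true) yPerm h0,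
        localize_apply_neg (b := false) yPerm (by simp [append_single_zero]),
        xPerm_append_true,
        localize_symm_apply_neg (b := false) yPerm (by simp [append_single_zero]),
        localize_apply_pos (b := true) yPerm (append_single_zero _ _),
        show dropN 1 (append [true] (append [true] (yPerm.symm (dropN 1 ξ)))) = _ from
          dropN_append [true] _,
        cancelD, Equiv.apply_symm_apply]
    funext n
    rcases n with _ | _ | _ | n <;>
      simp [xPerm, xFun, append_single_zero, append_single_succ, dropN, h0]

lemma comm_fun (ξ : Seq) :
    localize [false] yPerm (localize [true] yPerm ξ) =
      localize [true] yPerm (localize [false] yPerm ξ) := by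
  cases h0 : ξ 0
  · rw [localize_apply_neg (b := true) yPerm (by simp [h0]),
        localize_apply_pos (b := false) yPerm h0,
        localize_apply_neg (b := true) yPerm (by simp [append_single_zero])]
  · rw [localize_apply_pos (b := true) yPerm h0,
        localize_apply_neg (b := false) yPerm (by simp [append_single_zero]),
        localize_apply_neg (b := false) yPerm (by simp [h0]),
        localize_apply_pos (b := true) yPerm h0]

/-- In the group of bijections of `2^ℕ` one has `y₁⁻¹ y₀ x_∅ y₀⁻¹ y₁ = x_∅²`;
equivalently, setting `√x_∅ := y₁ y₀⁻¹ x_∅ y₀ y₁⁻¹`, one has `(√x_∅)² = x_∅`. -/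
theorem sqrt_x_identity :
    (py [true])⁻¹ * py [false] * px [] * (py [false])⁻¹ * py [true] = px [] ^ 2 ∧
    (py [true] * (py [false])⁻¹ * px [] * py [false] * (py [true])⁻¹) ^ 2 = px [] := by
  have h1 : (py [true])⁻¹ * py [false] * px [] * (py [false])⁻¹ * py [true] = px [] ^ 2 := by
    simp only [px, py, ← MulOpposite.op_inv, ← MulOpposite.op_mul, pow_two]
    rw [MulOpposite.op_inj]
    refine Equiv.ext fun ξ => ?_
    simp only [Equiv.Perm.coe_mul, Function.comp_apply, Equiv.Perm.inv_def,
      localize_nil_apply]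
    exact key_fun ξ
  have hcomm : py [true] * py [false] = py [false] * py [true] := by
    simp only [py, ← MulOpposite.op_mul]
    rw [MulOpposite.op_inj]
    refine Equiv.ext fun ξ => ?_
    simp only [Equiv.Perm.coe_mul, Function.comp_apply]
    exact comm_fun ξ
  refine ⟨h1, ?_⟩
  have hC : Commute (py [true]) (py [false]) := hcomm
  have e1 : py [true] * (py [false])⁻¹ = (py [false])⁻¹ * py [true] := hC.inv_right.eq
  have e2 : py [false] * (py [true])⁻¹ = (py [true])⁻¹ * py [false] := hC.symm.inv_right.eq
  have h1' : ((py [false])⁻¹ * py [true])⁻¹ * px [] * ((py [false])⁻¹ * py [true]) =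
      px [] ^ 2 := by
    rw [← h1]; group
  have key2 : (py [true] * (py [false])⁻¹ * px [] * py [false] * (py [true])⁻¹) ^ 2 =
      py [true] * (py [false])⁻¹ * px [] ^ 2 * (py [false] * (py [true])⁻¹) := by
    rw [sq, sq]
    group
  rw [key2, ← h1', e1, e2]
  group
  

end LodhaMoore
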